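/- With the notation of the context, assume α ≠ β and |∑_{i∈ℤ} (α_i − β_i) i²| ≤ 10 ∑_{i∈ℤ} |α_i − β_i|. Then for every i ∈ ℤ with i ≠ 0 and α_i ≠ β_i one has |i| ≤ 20|π| + 31 ∑_{l=3}^N n̂_l². -/

import Mathlib

open scoped BigOperators

/-- `⟨j⟩ := max(|j|,1)` as a real number. -/
noncomputable def jap (j : ℤ) : ℝ := max (|(j : ℝ)|) 1

lemma one_le_jap (j : ℤ) : 1 ≤ jap j := le_max_right _ _
lemma jap_nonneg (j : ℤ) : 0 ≤ jap j := le_trans zero_le_one (one_le_jap j)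
lemma abs_le_jap (j : ℤ) : |(j:ℝ)| ≤ jap j := le_max_left _ _
lemma jap_le_sq (j : ℤ) : jap j ≤ jap j ^ 2 := by nlinarith [one_le_jap j]
lemma one_le_jap_sq (j : ℤ) : 1 ≤ jap j ^ 2 := by nlinarith [one_le_jap j]
lemma sq_le_jap_sq (j : ℤ) : (j:ℝ)^2 ≤ jap j ^2 := by
  have := abs_le_jap j
  nlinarith [abs_nonneg ((j:ℝ)), sq_abs ((j:ℝ))]
lemma abs_le_jap_sq (j : ℤ) : |(j:ℝ)| ≤ jap j ^ 2 := (abs_le_jap j).trans (jap_le_sq j)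

lemma aux_sum (φ : ℤ → ℝ) (g : ℤ → ℕ) (s : Finset ℤ) :
    (Multiset.map φ (∑ a ∈ s, g a • ({a} : Multiset ℤ))).sum = ∑ i ∈ s, (g i : ℝ) * φ i := by
  classical
  induction s using Finset.induction with
  | empty => simp
  | insert _ _ h ih =>
      rw [Finset.sum_insert h, Finset.sum_insert h, Multiset.map_add, Multiset.sum_add, ih,
        Multiset.map_nsmul]
      simp [Multiset.sum_nsmul, nsmul_eq_mul]

lemma sum_map_toMultiset (f : ℤ →₀ ℕ) (φ : ℤ → ℝ) :
    ((f.toMultiset.map φ)).sum = ∑ i ∈ f.support, (f i : ℝ) * φ i := by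
  classical
  rw [Finsupp.toMultiset_apply, Finsupp.sum, aux_sum]

lemma key_comb (f : ℤ →₀ ℕ) (i₀ : ℤ) (x₁ x₂ : ℝ) (r : List ℝ)
    (hM : (x₁ ::ₘ x₂ ::ₘ (↑r : Multiset ℝ)) = Multiset.map jap f.toMultiset)
    (hi : f i₀ ≠ 0) (hnr : jap i₀ ∉ r) :
    (2 ≤ f i₀ ∧ x₁ = jap i₀ ∧ x₂ = jap i₀) ∨
    (f i₀ = 1 ∧ ∃ j, j ≠ i₀ ∧ f j ≠ 0 ∧ x₁^2 + x₂^2 = jap i₀^2 + jap j^2) := by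
  classical
  have hdec : Multiset.map jap f.toMultiset
      = Multiset.map jap ((f.erase i₀).toMultiset) + (f i₀) • {jap i₀} := by
    conv_lhs => rw [← Finsupp.erase_add_single i₀ f]
    rw [Finsupp.toMultiset_add, Multiset.map_add, Finsupp.toMultiset_single,
      Multiset.map_nsmul]
    simp
  have hcount : f i₀ ≤ Multiset.count (jap i₀) (x₁ ::ₘ x₂ ::ₘ (↑r : Multiset ℝ)) := by
    rw [hM, hdec, Multiset.count_add]
    simp [Multiset.count_nsmul]
  have hc0 : Multiset.count (jap i₀) (↑r : Multiset ℝ) = 0 :=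
    Multiset.count_eq_zero_of_notMem (by simpa using hnr)
  rcases Nat.lt_or_ge (f i₀) 2 with h1 | h2
  · -- f i₀ = 1
    have hf1 : f i₀ = 1 := by omega
    right
    refine ⟨hf1, ?_⟩
    have hM' : (x₁ ::ₘ x₂ ::ₘ (↑r : Multiset ℝ))
        = jap i₀ ::ₘ Multiset.map jap ((f.erase i₀).toMultiset) := by
      rw [hM, hdec, hf1]
      simp [add_comm]
    have hmem : jap i₀ ∈ (x₁ ::ₘ x₂ ::ₘ (↑r : Multiset ℝ)) := by
      rw [hM']; exact Multiset.mem_cons_self _ _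
    have herase : (x₁ ::ₘ x₂ ::ₘ (↑r : Multiset ℝ)).erase (jap i₀)
        = Multiset.map jap ((f.erase i₀).toMultiset) := by
      rw [hM', Multiset.erase_cons_head]
    have hor : x₁ = jap i₀ ∨ x₂ = jap i₀ := by
      rcases Multiset.mem_cons.mp hmem with h | h
      · exact Or.inl h.symm
      rcases Multiset.mem_cons.mp h with h | h
      · exact Or.inr h.symm
      · exact absurd h (by simpa using hnr)
    have hget : ∀ v : ℝ, v ∈ Multiset.map jap ((f.erase i₀).toMultiset) →
        ∃ j, j ≠ i₀ ∧ f j ≠ 0 ∧ jap j = v := by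
      intro v hv
      rcases Multiset.mem_map.mp hv with ⟨j, hj, hjv⟩
      rw [Finsupp.mem_toMultiset, Finsupp.mem_support_iff] at hj
      have hji : j ≠ i₀ := by
        intro e; subst e; simp [Finsupp.erase_apply] at hj
      refine ⟨j, hji, ?_, hjv⟩
      rwa [Finsupp.erase_apply, if_neg hji] at hj
    rcases hor with h | h
    · have hx2 : x₂ ∈ Multiset.map jap ((f.erase i₀).toMultiset) := by
        rw [← herase, h, Multiset.erase_cons_head]
        exact Multiset.mem_cons_self _ _
      rcases hget x₂ hx2 with ⟨j, hji, hfj, hjv⟩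
      exact ⟨j, hji, hfj, by rw [h, hjv]⟩
    · by_cases hx1 : x₁ = jap i₀
      · have hx2 : x₂ ∈ Multiset.map jap ((f.erase i₀).toMultiset) := by
          rw [← herase, hx1, Multiset.erase_cons_head]
          exact Multiset.mem_cons_self _ _
        rcases hget x₂ hx2 with ⟨j, hji, hfj, hjv⟩
        exact ⟨j, hji, hfj, by rw [hx1, hjv]⟩
      · have hx1mem : x₁ ∈ Multiset.map jap ((f.erase i₀).toMultiset) := by
          rw [← herase, Multiset.erase_cons_tail _ (by simpa using hx1), h,
            Multiset.erase_cons_head]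
          exact Multiset.mem_cons_self _ _
        rcases hget x₁ hx1mem with ⟨j, hji, hfj, hjv⟩
        refine ⟨j, hji, hfj, by rw [h, hjv]; ring⟩
  · left
    refine ⟨h2, ?_⟩
    rw [Multiset.count_cons, Multiset.count_cons, hc0] at hcount
    by_cases e1 : jap i₀ = x₁
    · by_cases e2 : jap i₀ = x₂
      · exact ⟨e1.symm, e2.symm⟩
      · rw [if_pos e1, if_neg e2] at hcount; omega
    · by_cases e2 : jap i₀ = x₂
      · rw [if_neg e1, if_pos e2] at hcount; omega
      · rw [if_neg e1, if_neg e2] at hcount; omega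

lemma g_abs_le (a b : ℕ) : |(a:ℝ) - b| ≤ (a:ℝ) + b := by
  have h1 : (0:ℝ) ≤ a := Nat.cast_nonneg a
  have h2 : (0:ℝ) ≤ b := Nat.cast_nonneg b
  rw [abs_le]; constructor <;> linarith

lemma sum_bound_gen (α β : ℤ →₀ ℕ) (w : ℤ → ℝ) (hw : ∀ i, |w i| ≤ jap i ^ 2) (s : Finset ℤ) :
    |∑ i ∈ s, ((α i:ℝ) - (β i:ℝ)) * w i| ≤ ∑ i ∈ s, ((α i:ℝ) + (β i:ℝ)) * jap i ^ 2 := by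
  refine (Finset.abs_sum_le_sum_abs _ _).trans (Finset.sum_le_sum fun i _ => ?_)
  rw [abs_mul]
  exact mul_le_mul (g_abs_le _ _) (hw i) (abs_nonneg _) (by positivity)

lemma sum_abs_bound (α β : ℤ →₀ ℕ) (s : Finset ℤ) :
    ∑ i ∈ s, |(α i:ℝ) - (β i:ℝ)| ≤ ∑ i ∈ s, ((α i:ℝ) + (β i:ℝ)) * jap i ^ 2 := by
  refine Finset.sum_le_sum fun i _ => (g_abs_le _ _).trans ?_
  exact le_mul_of_one_le_right (by positivity) (one_le_jap_sq i)
set_option maxHeartbeats 1000000 in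
/-- If `α ≠ β` and `|∑ (α_i−β_i) i²| ≤ 10 ∑ |α_i−β_i|`, then every `i ≠ 0`
with `α_i ≠ β_i` satisfies `|i| ≤ 20|π| + 31 ∑_{l≥3} n̂_l²` (the decreasing rearrangement `n̂`
being encoded by the sorted list `L`). -/
theorem abs_index_le_of_small_divisor
    (α β : ℤ →₀ ℕ) (hne : α ≠ β)
    (hmass : (α.sum fun _ n => n) = β.sum fun _ n => n)
    (hmass1 : 1 ≤ α.sum fun _ n => n)
    (L : List ℝ) (hsort : L.Pairwise (· ≥ ·))
    (hL : (L : Multiset ℝ) = Multiset.map jap (α + β).toMultiset)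
    (π : ℝ)
    (hπ : π = ∑ i ∈ α.support ∪ β.support, (i : ℝ) * ((α i : ℝ) - (β i : ℝ)))
    (hsmall : |∑ i ∈ α.support ∪ β.support, ((α i : ℝ) - (β i : ℝ)) * (i : ℝ) ^ 2| ≤
      10 * ∑ i ∈ α.support ∪ β.support, |(α i : ℝ) - (β i : ℝ)|) :
    ∀ i : ℤ, i ≠ 0 → α i ≠ β i →
      (|(i : ℝ)|) ≤ 20 * |π| + 31 * ((L.drop 2).map fun x => x ^ 2).sum := by
  classical
  intro i₀ hi₀ hab
  set S : Finset ℤ := α.support ∪ β.support with hSdef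
  have hi₀S : i₀ ∈ S := by
    simp only [hSdef, Finset.mem_union, Finsupp.mem_support_iff]
    omega
  have habs_pi : 0 ≤ |π| := abs_nonneg _
  -- list has length ≥ 2
  have h2le : 2 ≤ L.length := by
    have hc := congrArg Multiset.card hL
    rw [Multiset.coe_card, Multiset.card_map, Finsupp.card_toMultiset] at hc
    have hsum : ((α+β).sum fun _ => id) = (α.sum fun _ n => n) + (β.sum fun _ n => n) := by
      exact Finsupp.sum_add_index' (by simp) (by simp)
    omega
  obtain ⟨x₁, x₂, r, rfl⟩ : ∃ x₁ x₂ r, L = x₁ :: x₂ :: r := by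
    rcases L with _ | ⟨x₁, _ | ⟨x₂, r⟩⟩
    · simp at h2le
    · simp at h2le
    · exact ⟨x₁, x₂, r, rfl⟩
  have hdrop : ((x₁ :: x₂ :: r : List ℝ).drop 2) = r := rfl
  rw [hdrop]
  set T : ℝ := (r.map fun x => x ^ 2).sum with hTdef
  have hT0 : 0 ≤ T := by
    apply List.sum_nonneg
    intro x hx
    rcases List.mem_map.mp hx with ⟨y, _, rfl⟩
    positivity
  have hyT : ∀ y ∈ r, y ^ 2 ≤ T := by
    intro y hy
    apply List.single_le_sum
    · intro x hx
      rcases List.mem_map.mp hx with ⟨z, _, rfl⟩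
      positivity
    · exact List.mem_map_of_mem hy
  -- 1 ≤ |i₀|
  have habs_i₀ : 1 ≤ |(i₀:ℝ)| := by
    have h1 : (1:ℤ) ≤ |i₀| := Int.one_le_abs (by simpa using hi₀)
    calc (1:ℝ) = ((1:ℤ):ℝ) := by norm_num
    _ ≤ ((|i₀|:ℤ):ℝ) := by exact_mod_cast h1
    _ = |(i₀:ℝ)| := by push_cast; ring
  -- total sum identity
  have hsupp : (α + β).support = S := by
    ext i
    simp only [hSdef, Finset.mem_union, Finsupp.mem_support_iff, Finsupp.add_apply]
    omega
  have hA : ∑ i ∈ S, ((α i:ℝ) + (β i:ℝ)) * jap i ^ 2 = x₁^2 + x₂^2 + T := by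
    have h1 := sum_map_toMultiset (α + β) (fun i => jap i ^ 2)
    have h2 : ((α+β).toMultiset.map fun x => jap x ^ 2)
        = (Multiset.map jap (α+β).toMultiset).map (fun x => x^2) := by
      rw [Multiset.map_map]; rfl
    rw [h2, ← hL] at h1
    have h3 : ((↑(x₁ :: x₂ :: r) : Multiset ℝ).map (fun x => x^2)).sum
        = x₁^2 + x₂^2 + T := by
      simp [hTdef]; ring
    rw [h3, hsupp] at h1
    calc ∑ i ∈ S, ((α i:ℝ) + (β i:ℝ)) * jap i ^ 2
        = ∑ i ∈ S, (((α + β) i : ℕ):ℝ) * jap i ^ 2 := by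
          apply Finset.sum_congr rfl
          intro i _
          rw [Finsupp.add_apply]
          push_cast
          ring
      _ = x₁^2 + x₂^2 + T := h1.symm
  -- case on jap i₀ ^ 2 vs T
  rcases le_or_gt (jap i₀ ^ 2) T with hcaseA | hcaseB
  · have := (abs_le_jap_sq i₀).trans hcaseA
    linarith
  -- case B
  have hnr : jap i₀ ∉ r := by
    intro hmem
    exact absurd (hyT _ hmem) (not_le.mpr hcaseB)
  have hfi₀ : (α + β) i₀ ≠ 0 := by
    simp only [Finsupp.add_apply]; omega
  have hM : (x₁ ::ₘ x₂ ::ₘ (↑r : Multiset ℝ)) = Multiset.map jap (α+β).toMultiset := by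
    simpa using hL
  rcases key_comb (α + β) i₀ x₁ x₂ r hM hfi₀ hnr with ⟨hf2, hx1, hx2⟩ | ⟨hf1, j, hji, hfj, hsq⟩
  · -- B-a : multiplicity ≥ 2 at i₀, both top slots jap i₀
    rw [Finsupp.add_apply] at hf2
    have hsplit := (Finset.add_sum_erase S (fun i => (i:ℝ) * ((α i:ℝ) - (β i:ℝ))) hi₀S).symm
    have hQsplit := (Finset.add_sum_erase S
      (fun i => ((α i:ℝ) + (β i:ℝ)) * jap i ^ 2) hi₀S).symm
    have hQrest : ∑ i ∈ S.erase i₀, ((α i:ℝ) + (β i:ℝ)) * jap i ^ 2 ≤ T := by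
      have h2c : (2:ℝ) ≤ (α i₀:ℝ) + (β i₀:ℝ) := by exact_mod_cast hf2
      have : 2 * jap i₀ ^ 2 ≤ ((α i₀:ℝ) + (β i₀:ℝ)) * jap i₀ ^ 2 := by nlinarith [one_le_jap_sq i₀]
      rw [hA, hx1, hx2] at hQsplit
      linarith
    have hbd := (sum_bound_gen α β (fun i => (i:ℝ)) (fun i => abs_le_jap_sq i) (S.erase i₀))
    have hbd' : |∑ i ∈ S.erase i₀, (i:ℝ) * ((α i:ℝ) - (β i:ℝ))| ≤ T := by
      calc |∑ i ∈ S.erase i₀, (i:ℝ) * ((α i:ℝ) - (β i:ℝ))|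
          = |∑ i ∈ S.erase i₀, ((α i:ℝ) - (β i:ℝ)) * (i:ℝ)| := by
            congr 1; apply Finset.sum_congr rfl; intro i _; ring
        _ ≤ _ := hbd
        _ ≤ T := hQrest
    -- |i₀ * g i₀| ≤ |π| + T
    have hg1 : 1 ≤ |(α i₀:ℝ) - (β i₀:ℝ)| := by
      have hd : ((α i₀:ℤ) - (β i₀:ℤ)) ≠ 0 := by omega
      have h1 : (1:ℤ) ≤ |(α i₀:ℤ) - (β i₀:ℤ)| := Int.one_le_abs hd
      calc (1:ℝ) ≤ ((|(α i₀:ℤ) - (β i₀:ℤ)|:ℤ):ℝ) := by exact_mod_cast h1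
      _ = |(α i₀:ℝ) - (β i₀:ℝ)| := by push_cast; ring
    have hkey : |(i₀:ℝ) * ((α i₀:ℝ) - (β i₀:ℝ))| ≤ |π| + T := by
      have : (i₀:ℝ) * ((α i₀:ℝ) - (β i₀:ℝ))
          = π - ∑ i ∈ S.erase i₀, (i:ℝ) * ((α i:ℝ) - (β i:ℝ)) := by
        rw [hπ, hsplit]; ring
      rw [this]
      calc |π - ∑ i ∈ S.erase i₀, (i:ℝ) * ((α i:ℝ) - (β i:ℝ))|
          ≤ |π| + |∑ i ∈ S.erase i₀, (i:ℝ) * ((α i:ℝ) - (β i:ℝ))| := abs_sub _ _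
        _ ≤ |π| + T := by linarith
    have : |(i₀:ℝ)| ≤ |(i₀:ℝ)| * |(α i₀:ℝ) - (β i₀:ℝ)| :=
      le_mul_of_one_le_right (abs_nonneg _) hg1
    rw [← abs_mul] at this
    linarith [this.trans hkey]
  · -- B-b : multiplicity 1 at i₀
    rw [Finsupp.add_apply] at hf1
    have hfj' : α j ≠ 0 ∨ β j ≠ 0 := by
      rw [Finsupp.add_apply] at hfj; omega
    have hjS : j ∈ S := by
      simp only [hSdef, Finset.mem_union, Finsupp.mem_support_iff]
      tauto
    have hjS' : j ∈ S.erase i₀ := Finset.mem_erase.mpr ⟨hji, hjS⟩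
    set S'' : Finset ℤ := (S.erase i₀).erase j with hS''
    have hsplit : ∀ h : ℤ → ℝ, ∑ i ∈ S, h i = h i₀ + h j + ∑ i ∈ S'', h i := by
      intro h
      rw [← Finset.add_sum_erase S h hi₀S, ← Finset.add_sum_erase _ h hjS']
      ring
    -- sum of Q over S''
    have hQi₀ : ((α i₀:ℝ) + (β i₀:ℝ)) = 1 := by exact_mod_cast hf1
    have hc1 : (1:ℝ) ≤ (α j:ℝ) + (β j:ℝ) := by
      have : 1 ≤ α j + β j := by omega
      exact_mod_cast this
    have hQS := hsplit (fun i => ((α i:ℝ) + (β i:ℝ)) * jap i ^ 2)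
    rw [hA, hsq] at hQS
    have hQ''nonneg : 0 ≤ ∑ i ∈ S'', ((α i:ℝ) + (β i:ℝ)) * jap i ^ 2 :=
      Finset.sum_nonneg fun i _ => by positivity
    have hrest : ∑ i ∈ S'', ((α i:ℝ) + (β i:ℝ)) * jap i ^ 2
        = T - ((α j:ℝ) + (β j:ℝ) - 1) * jap j ^ 2 := by
      have := hQS
      rw [hQi₀] at this
      linear_combination -this
    have hrest_le : ∑ i ∈ S'', ((α i:ℝ) + (β i:ℝ)) * jap i ^ 2 ≤ T := by
      have h1 : 0 ≤ ((α j:ℝ) + (β j:ℝ) - 1) * jap j ^ 2 := by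
        have : (0:ℝ) ≤ jap j ^ 2 := by positivity
        nlinarith
      linarith
    -- g i₀ = ±1
    have hu : ((α i₀:ℝ) - (β i₀:ℝ)) = 1 ∨ ((α i₀:ℝ) - (β i₀:ℝ)) = -1 := by
      have : (α i₀ = 1 ∧ β i₀ = 0) ∨ (α i₀ = 0 ∧ β i₀ = 1) := by omega
      rcases this with ⟨h1, h2⟩ | ⟨h1, h2⟩ <;> simp [h1, h2]
    have hu_abs : |(α i₀:ℝ) - (β i₀:ℝ)| = 1 := by
      rcases hu with h | h <;> rw [h] <;> simp
    -- bounds over S''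
    have hb_mom : |∑ i ∈ S'', (i:ℝ) * ((α i:ℝ) - (β i:ℝ))| ≤ T := by
      calc |∑ i ∈ S'', (i:ℝ) * ((α i:ℝ) - (β i:ℝ))|
          = |∑ i ∈ S'', ((α i:ℝ) - (β i:ℝ)) * (i:ℝ)| := by
            congr 1; apply Finset.sum_congr rfl; intro i _; ring
        _ ≤ _ := sum_bound_gen α β (fun i => (i:ℝ)) (fun i => abs_le_jap_sq i) S''
        _ ≤ T := hrest_le
    rcases le_or_gt 2 ((α j:ℝ) + (β j:ℝ)) with hc2 | hcm1
    · -- m_j ≥ 2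
      have h2T : ((α j:ℝ) + (β j:ℝ) - 1) * jap j ^ 2 ≤ T := by
        linarith [hQ''nonneg, hrest]
      have hjap_le : jap j ^ 2 ≤ T := by
        have e : ((α j:ℝ) + (β j:ℝ) - 1) * jap j ^ 2
            = ((α j:ℝ) + (β j:ℝ) - 2) * jap j ^ 2 + jap j ^ 2 := by ring
        have hp : (0:ℝ) ≤ ((α j:ℝ) + (β j:ℝ) - 2) * jap j ^ 2 :=
          mul_nonneg (by linarith) (by positivity)
        linarith
      have hgj : |(j:ℝ) * ((α j:ℝ) - (β j:ℝ))| ≤ 2 * T := by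
        have h1 : |(j:ℝ) * ((α j:ℝ) - (β j:ℝ))| ≤ jap j ^ 2 * ((α j:ℝ) + (β j:ℝ)) := by
          rw [abs_mul]
          exact mul_le_mul (abs_le_jap_sq j) (g_abs_le _ _) (abs_nonneg _) (by positivity)
        have e2 : jap j ^ 2 * ((α j:ℝ) + (β j:ℝ))
            = ((α j:ℝ) + (β j:ℝ) - 1) * jap j ^ 2 + jap j ^ 2 := by ring
        linarith
      have hkey : |(i₀:ℝ) * ((α i₀:ℝ) - (β i₀:ℝ))| ≤ |π| + 3 * T := by
        have heq : (i₀:ℝ) * ((α i₀:ℝ) - (β i₀:ℝ))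
            = π - (j:ℝ) * ((α j:ℝ) - (β j:ℝ))
              - ∑ i ∈ S'', (i:ℝ) * ((α i:ℝ) - (β i:ℝ)) := by
          rw [hπ, hsplit (fun i => (i:ℝ) * ((α i:ℝ) - (β i:ℝ)))]; ring
        rw [heq]
        have t1 := abs_sub (π - (j:ℝ) * ((α j:ℝ) - (β j:ℝ)))
          (∑ i ∈ S'', (i:ℝ) * ((α i:ℝ) - (β i:ℝ)))
        have t2 := abs_sub π ((j:ℝ) * ((α j:ℝ) - (β j:ℝ)))
        linarith
      rw [abs_mul, hu_abs, mul_one] at hkey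
      linarith
    · -- m_j = 1
      have hfj1 : α j + β j = 1 := by
        have : (α j:ℝ) + (β j:ℝ) < 2 := hcm1
        have h2 : α j + β j < 2 := by exact_mod_cast this
        omega
      have hcases : (α j = 1 ∧ β j = 0) ∨ (α j = 0 ∧ β j = 1) := by omega
      have hw : ((α j:ℝ) - (β j:ℝ)) = 1 ∨ ((α j:ℝ) - (β j:ℝ)) = -1 := by
        rcases hcases with ⟨h1, h2⟩ | ⟨h1, h2⟩ <;> simp [h1, h2]
      have hw_abs : |(α j:ℝ) - (β j:ℝ)| = 1 := by
        rcases hw with h | h <;> rw [h] <;> simp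
      have hcj : ((α j:ℝ) + (β j:ℝ)) = 1 := by exact_mod_cast hfj1
      have hrest1 : ∑ i ∈ S'', ((α i:ℝ) + (β i:ℝ)) * jap i ^ 2 = T := by
        rw [hrest, hcj]; ring
      -- bounds
      have hb_zero : |∑ i ∈ S'', ((α i:ℝ) - (β i:ℝ))| ≤ T := by
        calc |∑ i ∈ S'', ((α i:ℝ) - (β i:ℝ))|
            = |∑ i ∈ S'', ((α i:ℝ) - (β i:ℝ)) * 1| := by simp
          _ ≤ _ := sum_bound_gen α β (fun _ => 1) (fun i => by
              simpa using one_le_jap_sq i) S''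
          _ ≤ T := hrest_le
      have hb_sq : |∑ i ∈ S'', ((α i:ℝ) - (β i:ℝ)) * (i:ℝ)^2| ≤ T := by
        calc |∑ i ∈ S'', ((α i:ℝ) - (β i:ℝ)) * (i:ℝ)^2|
            ≤ _ := sum_bound_gen α β (fun i => (i:ℝ)^2) (fun i => by
              rw [abs_of_nonneg (by positivity)]; exact sq_le_jap_sq i) S''
          _ ≤ T := hrest_le
      have hb_abs : ∑ i ∈ S'', |(α i:ℝ) - (β i:ℝ)| ≤ T :=
        le_trans (sum_abs_bound α β S'') hrest_le
      -- sum of g over S is 0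
      have h0 : ∑ i ∈ S, ((α i:ℝ) - (β i:ℝ)) = 0 := by
        rw [Finset.sum_sub_distrib]
        have hαs : ∑ i ∈ S, (α i : ℝ) = ∑ i ∈ α.support, (α i : ℝ) :=
          (Finset.sum_subset Finset.subset_union_left (fun x _ hx => by
            simp [Finsupp.notMem_support_iff.mp hx])).symm
        have hβs : ∑ i ∈ S, (β i : ℝ) = ∑ i ∈ β.support, (β i : ℝ) :=
          (Finset.sum_subset Finset.subset_union_right (fun x _ hx => by
            simp [Finsupp.notMem_support_iff.mp hx])).symm
        have hcast : ∑ i ∈ α.support, (α i : ℝ) = ∑ i ∈ β.support, (β i : ℝ) := by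
          have := hmass
          rw [Finsupp.sum, Finsupp.sum] at this
          exact_mod_cast congrArg (Nat.cast : ℕ → ℝ) this
        rw [hαs, hβs, hcast, sub_self]
      -- abs sum over S ≤ 2 + T
      have habs_S : ∑ i ∈ S, |(α i:ℝ) - (β i:ℝ)| ≤ 2 + T := by
        rw [hsplit (fun i => |(α i:ℝ) - (β i:ℝ)|), hu_abs, hw_abs]
        linarith
      -- main Σ₂ bound
      have hSig : |((α i₀:ℝ) - (β i₀:ℝ)) * (i₀:ℝ)^2 + ((α j:ℝ) - (β j:ℝ)) * (j:ℝ)^2|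
          ≤ 20 + 11 * T := by
        have heq := hsplit (fun i => ((α i:ℝ) - (β i:ℝ)) * (i:ℝ)^2)
        rw [heq] at hsmall
        have t1 := abs_sub
          (((α i₀:ℝ) - (β i₀:ℝ)) * (i₀:ℝ)^2 + ((α j:ℝ) - (β j:ℝ)) * (j:ℝ)^2
            + ∑ i ∈ S'', ((α i:ℝ) - (β i:ℝ)) * (i:ℝ)^2)
          (∑ i ∈ S'', ((α i:ℝ) - (β i:ℝ)) * (i:ℝ)^2)
        have t2 : |((α i₀:ℝ) - (β i₀:ℝ)) * (i₀:ℝ)^2 + ((α j:ℝ) - (β j:ℝ)) * (j:ℝ)^2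
            + ∑ i ∈ S'', ((α i:ℝ) - (β i:ℝ)) * (i:ℝ)^2| ≤ 10 * (2 + T) := by
          calc _ ≤ 10 * ∑ i ∈ S, |(α i:ℝ) - (β i:ℝ)| := hsmall
            _ ≤ 10 * (2 + T) := by linarith
        have t3 : ((α i₀:ℝ) - (β i₀:ℝ)) * (i₀:ℝ)^2 + ((α j:ℝ) - (β j:ℝ)) * (j:ℝ)^2
            = (((α i₀:ℝ) - (β i₀:ℝ)) * (i₀:ℝ)^2 + ((α j:ℝ) - (β j:ℝ)) * (j:ℝ)^2
              + ∑ i ∈ S'', ((α i:ℝ) - (β i:ℝ)) * (i:ℝ)^2)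
              - ∑ i ∈ S'', ((α i:ℝ) - (β i:ℝ)) * (i:ℝ)^2 := by ring
        rw [t3]
        linarith
      -- momentum identity
      have hmom : (i₀:ℝ) * ((α i₀:ℝ) - (β i₀:ℝ)) + (j:ℝ) * ((α j:ℝ) - (β j:ℝ))
          = π - ∑ i ∈ S'', (i:ℝ) * ((α i:ℝ) - (β i:ℝ)) := by
        rw [hπ, hsplit (fun i => (i:ℝ) * ((α i:ℝ) - (β i:ℝ)))]; ring
      -- zero-sum identity
      have hzero : ((α i₀:ℝ) - (β i₀:ℝ)) + ((α j:ℝ) - (β j:ℝ))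
          = - ∑ i ∈ S'', ((α i:ℝ) - (β i:ℝ)) := by
        have := hsplit (fun i => ((α i:ℝ) - (β i:ℝ)))
        rw [h0] at this
        linarith
      set u := ((α i₀:ℝ) - (β i₀:ℝ)) with hudef
      set w := ((α j:ℝ) - (β j:ℝ)) with hwdef
      have hcase_uw : w = u ∨ w = -u := by
        rcases hu with h | h <;> rcases hw with h' | h' <;> rw [h, h'] <;> simp
      rcases hcase_uw with heqw | heqw
      · -- same signs : T ≥ 2 and i₀² ≤ 20 + 11T
        have hT2 : 2 ≤ T := by
          have h2 : |u + w| = 2 := by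
            rcases hu with h | h <;> rw [heqw, h] <;> norm_num
          rw [hzero, abs_neg] at h2
          linarith [hb_zero, h2.symm.le]
        have hsq_bound : (i₀:ℝ)^2 + (j:ℝ)^2 ≤ 20 + 11 * T := by
          have h1 : |u * (i₀:ℝ)^2 + w * (j:ℝ)^2| = (i₀:ℝ)^2 + (j:ℝ)^2 := by
            rw [heqw, show u * (i₀:ℝ)^2 + u * (j:ℝ)^2 = u * ((i₀:ℝ)^2 + (j:ℝ)^2) by ring,
              abs_mul, hu_abs, one_mul, abs_of_nonneg (by positivity)]
          rw [← h1]
          exact hSig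
        have hii : |(i₀:ℝ)| ≤ (i₀:ℝ)^2 := by
          nlinarith [sq_abs ((i₀:ℝ)), habs_i₀]
        nlinarith [sq_nonneg ((j:ℝ))]
      · -- opposite signs
        have hij1 : 1 ≤ |(i₀:ℝ) - (j:ℝ)| := by
          have hne' : i₀ - j ≠ 0 := sub_ne_zero.mpr (Ne.symm hji)
          have h1 : (1:ℤ) ≤ |i₀ - j| := Int.one_le_abs hne'
          calc (1:ℝ) ≤ ((|i₀ - j|:ℤ):ℝ) := by exact_mod_cast h1
          _ = |(i₀:ℝ) - (j:ℝ)| := by push_cast; ring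
        have hd1 : |(i₀:ℝ) - (j:ℝ)| ≤ |π| + T := by
          have h1 : u * ((i₀:ℝ) - (j:ℝ)) = (i₀:ℝ) * u + (j:ℝ) * w := by
            rw [heqw]; ring
          have h2 : |u * ((i₀:ℝ) - (j:ℝ))| = |(i₀:ℝ) - (j:ℝ)| := by
            rw [abs_mul, hu_abs, one_mul]
          rw [← h2, h1, hmom]
          calc |π - ∑ i ∈ S'', (i:ℝ) * ((α i:ℝ) - (β i:ℝ))|
              ≤ |π| + |∑ i ∈ S'', (i:ℝ) * ((α i:ℝ) - (β i:ℝ))| := abs_sub _ _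
            _ ≤ |π| + T := by linarith
        have hd2 : |(i₀:ℝ)^2 - (j:ℝ)^2| ≤ 20 + 11 * T := by
          have h1 : u * ((i₀:ℝ)^2 - (j:ℝ)^2) = u * (i₀:ℝ)^2 + w * (j:ℝ)^2 := by
            rw [heqw]; ring
          have h2 : |u * ((i₀:ℝ)^2 - (j:ℝ)^2)| = |(i₀:ℝ)^2 - (j:ℝ)^2| := by
            rw [abs_mul, hu_abs, one_mul]
          rw [← h2, h1]
          exact hSig
        have hsum_le : |(i₀:ℝ) + (j:ℝ)| ≤ 20 + 11 * T := by
          have hfac : (i₀:ℝ)^2 - (j:ℝ)^2 = ((i₀:ℝ) + j) * ((i₀:ℝ) - j) := by ring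
          rw [hfac, abs_mul] at hd2
          nlinarith [abs_nonneg ((i₀:ℝ) + j)]
        have h2i : 2 * |(i₀:ℝ)| ≤ |(i₀:ℝ) + j| + |(i₀:ℝ) - j| := by
          have := abs_add_le ((i₀:ℝ) + j) ((i₀:ℝ) - j)
          rw [show ((i₀:ℝ) + j) + ((i₀:ℝ) - j) = 2 * (i₀:ℝ) by ring, abs_mul] at this
          simpa using this
        have hone : 1 ≤ |π| + T := le_trans hij1 hd1
        linarith
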